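/- Let n ≥ 1, let g be a real polynomial, let U be an n×n real orthogonal matrix (U · Uᵀ = 1), and let λ : Fin n → ℝ with λ i ≠ 0 for all i. Set M = U · diag(λ) · Uᵀ (so M is symmetric and invertible). Then for every vector x ∈ ℝⁿ, the Euclidean norms satisfy ‖g(M).mulVec x‖ ≤ (max_i |g(λ i)| / |λ i|) · ‖M.mulVec x‖. In particular, the generalized Rayleigh quotient ‖g(M)x‖² / ‖Mx‖² is bounded above by the largest eigenvalue of M⁻² g(M)², which equals max_i (g(λ i)/λ i)². -/

import Mathlib

open Matrix

lemma conj_pow_aux (n : ℕ) (U D : Matrix (Fin n) (Fin n) ℝ) (hU : U * Uᵀ = 1)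
    (hU' : Uᵀ * U = 1) (k : ℕ) : (U * D * Uᵀ) ^ k = U * D ^ k * Uᵀ := by
  induction k with
  | zero => simp [hU]
  | succ k ih =>
      rw [pow_succ, ih, pow_succ]
      calc U * D ^ k * Uᵀ * (U * D * Uᵀ) = U * D ^ k * (Uᵀ * U) * D * Uᵀ := by
            simp only [Matrix.mul_assoc]
        _ = U * (D ^ k * D) * Uᵀ := by rw [hU']; simp only [Matrix.mul_one, Matrix.mul_assoc]

lemma aeval_conj_aux (n : ℕ) (U D : Matrix (Fin n) (Fin n) ℝ) (hU : U * Uᵀ = 1)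
    (hU' : Uᵀ * U = 1) (g : Polynomial ℝ) :
    Polynomial.aeval (U * D * Uᵀ) g = U * Polynomial.aeval D g * Uᵀ := by
  induction g using Polynomial.induction_on' with
  | add p q hp hq => rw [map_add, map_add, hp, hq]; simp [Matrix.mul_add, Matrix.add_mul]
  | monomial k a =>
      rw [Polynomial.aeval_monomial, Polynomial.aeval_monomial, conj_pow_aux n U D hU hU' k]
      simp only [Algebra.algebraMap_eq_smul_one, smul_mul_assoc, one_mul, mul_smul_comm]

lemma aeval_diagonal_aux (n : ℕ) (lam : Fin n → ℝ) (g : Polynomial ℝ) :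
    Polynomial.aeval (Matrix.diagonal lam) g
      = Matrix.diagonal (fun i => g.eval (lam i)) := by
  induction g using Polynomial.induction_on' with
  | add p q hp hq => simp [map_add, hp, hq, diagonal_add]
  | monomial k a =>
      ext i j
      rw [Polynomial.aeval_monomial, Matrix.diagonal_pow, Algebra.algebraMap_eq_smul_one,
        smul_mul_assoc, one_mul]
      by_cases h : i = j <;>
        simp [h, Polynomial.eval_monomial, Matrix.diagonal_apply, Matrix.diagonal_apply_ne]

theorem polynomial_filter_rayleigh_bound
    (n : ℕ) (hn : 1 ≤ n) (g : Polynomial ℝ)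
    (U : Matrix (Fin n) (Fin n) ℝ) (hU : U * Uᵀ = 1)
    (lam : Fin n → ℝ) (hlam : ∀ i, lam i ≠ 0) :
    ∀ x : Fin n → ℝ,
      ‖(WithLp.equiv 2 (Fin n → ℝ)).symm
          ((Polynomial.aeval (U * Matrix.diagonal lam * Uᵀ) g).mulVec x)‖ ≤
        (⨆ i : Fin n, |g.eval (lam i)| / |lam i|) *
          ‖(WithLp.equiv 2 (Fin n → ℝ)).symm
            ((U * Matrix.diagonal lam * Uᵀ).mulVec x)‖ := by
  intro x
  have hU' : Uᵀ * U = 1 := mul_eq_one_comm.mp hU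
  haveI : Nonempty (Fin n) := ⟨⟨0, hn⟩⟩
  set C : ℝ := ⨆ i : Fin n, |g.eval (lam i)| / |lam i| with hC
  have hCnn : 0 ≤ C := le_ciSup_of_le (Set.Finite.bddAbove (Set.finite_range _))
    (Classical.arbitrary _) (div_nonneg (abs_nonneg _) (abs_nonneg _))
  have hCi : ∀ i, |g.eval (lam i)| / |lam i| ≤ C := fun i =>
    le_ciSup (f := fun i => |g.eval (lam i)| / |lam i|)
      (Set.Finite.bddAbove (Set.finite_range _)) i
  -- norm of U *ᵥ w equals norm of w
  have hnormU : ∀ w : Fin n → ℝ,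
      ‖(WithLp.equiv 2 (Fin n → ℝ)).symm (U.mulVec w)‖
        = ‖(WithLp.equiv 2 (Fin n → ℝ)).symm w‖ := by
    intro w
    rw [EuclideanSpace.norm_eq, EuclideanSpace.norm_eq]
    simp only [WithLp.equiv_symm_apply, PiLp.toLp_apply]
    congr 1
    have : ∑ i, ‖U.mulVec w i‖ ^ 2 = (U.mulVec w) ⬝ᵥ (U.mulVec w) := by
      simp [dotProduct, sq_abs, pow_two]
    rw [this, dotProduct_mulVec, ← mulVec_transpose, mulVec_mulVec, hU', one_mulVec]
    simp [dotProduct, sq_abs, pow_two]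
  set y : Fin n → ℝ := Uᵀ.mulVec x with hy
  have key : Polynomial.aeval (U * Matrix.diagonal lam * Uᵀ) g
      = U * Matrix.diagonal (fun i => g.eval (lam i)) * Uᵀ := by
    rw [aeval_conj_aux n U _ hU hU' g, aeval_diagonal_aux]
  rw [key]
  have h1 : (U * Matrix.diagonal (fun i => g.eval (lam i)) * Uᵀ).mulVec x
      = U.mulVec (fun i => g.eval (lam i) * y i) := by
    rw [← mulVec_mulVec, ← mulVec_mulVec]
    have : (Matrix.diagonal fun i => g.eval (lam i)) *ᵥ (Uᵀ *ᵥ x)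
        = fun i => g.eval (lam i) * y i := by
      funext i; rw [mulVec_diagonal]
    rw [this]
  have h2 : (U * Matrix.diagonal lam * Uᵀ).mulVec x
      = U.mulVec (fun i => lam i * y i) := by
    rw [← mulVec_mulVec, ← mulVec_mulVec]
    have : Matrix.diagonal lam *ᵥ (Uᵀ *ᵥ x) = fun i => lam i * y i := by
      funext i; rw [mulVec_diagonal]
    rw [this]
  rw [h1, h2, hnormU, hnormU]
  rw [EuclideanSpace.norm_eq, EuclideanSpace.norm_eq]
  simp only [WithLp.equiv_symm_apply, PiLp.toLp_apply]
  rw [← Real.sqrt_sq hCnn, ← Real.sqrt_mul (sq_nonneg C)]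
  apply Real.sqrt_le_sqrt
  rw [Finset.mul_sum]
  apply Finset.sum_le_sum
  intro i _
  have hyi : ‖(g.eval (lam i) * y i : ℝ)‖ ^ 2 = (g.eval (lam i))^2 * (y i)^2 := by
    rw [Real.norm_eq_abs, sq_abs]; ring
  have hyi2 : C ^ 2 * ‖(lam i * y i : ℝ)‖ ^ 2 = C^2 * ((lam i)^2 * (y i)^2) := by
    rw [Real.norm_eq_abs, sq_abs]; ring
  rw [hyi, hyi2]
  have h3 : (g.eval (lam i))^2 ≤ C^2 * (lam i)^2 := by
    have := hCi i
    have hli : 0 < |lam i| := abs_pos.mpr (hlam i)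
    rw [div_le_iff₀ hli] at this
    calc (g.eval (lam i))^2 = |g.eval (lam i)|^2 := (sq_abs _).symm
      _ ≤ (C * |lam i|)^2 := by
          apply sq_le_sq' _ this
          nlinarith [abs_nonneg (g.eval (lam i))]
      _ = C^2 * (lam i)^2 := by rw [mul_pow, sq_abs]
  nlinarith [sq_nonneg (y i)]
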